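/- Let G be a graph containing vertex-disjoint paths P_1,...,P_a and vertex-disjoint trees T_1,...,T_b such that for all i and j the intersection P_i ∩ T_j is nonempty. Then the collection B = { T_j ∪ P_i : i ∈ [a], j ∈ [b] } is a bramble in G of order at least min(a, b). -/

import Mathlib

/-- A bramble in `G`: a collection of nonempty vertex sets of connected subgraphs
of `G` such that any two of its sets touch (intersect or are joined by an edge). -/
def IsBramble {V : Type} (G : SimpleGraph V) (B : Set (Set V)) : Prop :=
  ∀ S ∈ B, S.Nonempty ∧ (G.induce S).Connected ∧
    ∀ S' ∈ B, (S ∩ S').Nonempty ∨ ∃ u ∈ S, ∃ v ∈ S', G.Adj u v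

/-- If `G` contains vertex-disjoint paths `P_1, …, P_a` and vertex-disjoint trees
`T_1, …, T_b` such that every `P i` meets every `T j`, then the collection
`{ T j ∪ P i }` is a bramble of order at least `min a b`. -/
theorem bramble_of_paths_and_trees {V : Type} (G : SimpleGraph V) (a b : ℕ)
    (pu pv : Fin a → V) (P : (i : Fin a) → G.Walk (pu i) (pv i))
    (hP : ∀ i, (P i).IsPath)
    (hPdisj : ∀ i i', i ≠ i' → ∀ v, v ∈ (P i).support → v ∉ (P i').support)
    (T : Fin b → SimpleGraph.Subgraph G) (hT : ∀ j, (T j).coe.IsTree)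
    (hTdisj : ∀ j j', j ≠ j' → Disjoint (T j).verts (T j').verts)
    (hmeet : ∀ i j, ∃ v, v ∈ (P i).support ∧ v ∈ (T j).verts) :
    IsBramble G {S | ∃ i j, S = {v | v ∈ (P i).support} ∪ (T j).verts} ∧
    ∀ W : Finset V,
      (∀ S ∈ {S | ∃ i j, S = {v | v ∈ (P i).support} ∪ (T j).verts}, ∃ v ∈ S, v ∈ W) →
      min a b ≤ W.card := by
  constructor
  · rintro S ⟨i, j, rfl⟩
    refine ⟨⟨pu i, Or.inl (P i).start_mem_support⟩, ?_, ?_⟩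
    · refine SimpleGraph.induce_union_connected (P i).connected_induce_support.preconnected
        ?_ ?_
      · exact (SimpleGraph.Subgraph.Connected.induce_verts
          (SimpleGraph.Subgraph.connected_iff'.mpr (hT j).isConnected)).preconnected
      · obtain ⟨v, hv1, hv2⟩ := hmeet i j
        exact ⟨v, hv1, hv2⟩
    · rintro S' ⟨i', j', rfl⟩
      left
      obtain ⟨v, hv1, hv2⟩ := hmeet i j'
      exact ⟨v, Or.inl hv1, Or.inr hv2⟩
  · intro W hW
    by_contra hlt
    push_neg at hlt
    have ha : W.card < a := lt_of_lt_of_le hlt (min_le_left a b)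
    have hb : W.card < b := lt_of_lt_of_le hlt (min_le_right a b)
    have hPfree : ∃ i, ∀ v ∈ W, v ∉ (P i).support := by
      by_contra h
      push_neg at h
      choose g hg1 hg2 using h
      have : Set.InjOn g (Finset.univ : Finset (Fin a)) := by
        intro i _ i' _ he
        by_contra hne
        exact hPdisj i i' hne (g i) (hg2 i) (he ▸ hg2 i')
      have := Finset.card_le_card_of_injOn g (fun i _ => hg1 i) this
      simp at this
      omega
    have hTfree : ∃ j, ∀ v ∈ W, v ∉ (T j).verts := by
      by_contra h
      push_neg at h
      choose g hg1 hg2 using h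
      have : Set.InjOn g (Finset.univ : Finset (Fin b)) := by
        intro j _ j' _ he
        by_contra hne
        exact Set.disjoint_left.mp (hTdisj j j' hne) (hg2 j) (he ▸ hg2 j')
      have := Finset.card_le_card_of_injOn g (fun j _ => hg1 j) this
      simp at this
      omega
    obtain ⟨i, hi⟩ := hPfree
    obtain ⟨j, hj⟩ := hTfree
    obtain ⟨v, hvS, hvW⟩ := hW _ ⟨i, j, rfl⟩
    cases hvS with
    | inl h => exact hi v hvW h
    | inr h => exact hj v hvW h
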